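/- The generalized Bernoulli numbers satisfy the Srivastava–Todorov formula: B_n^{(l)} = ∑_{k=0}^n C(l+n, n−k) · C(l+k−1, k) · (n!/(n+k)!) · ∑_{j=0}^k (−1)^j C(k,j) j^{n+k}. -/

import Mathlib

open Nat Finset PowerSeries

noncomputable def Fs : ℚ⟦X⟧ := PowerSeries.mk fun k => (1:ℚ)/(k+1)!
noncomputable def Hs : ℚ⟦X⟧ := PowerSeries.mk fun k => (1:ℚ)/(k+2)!
noncomputable def Gs : ℚ⟦X⟧ := X * Hs

lemma Fs_eq : Fs = 1 + Gs := by
  ext j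
  rw [Fs, Gs, Hs, map_add, coeff_mk]
  cases j with
  | zero => simp
  | succ i => simp [PowerSeries.coeff_succ_X_mul]

lemma coeff_Gs_pow {m n : ℕ} (h : n < m) : PowerSeries.coeff n (Gs^m) = 0 := by
  rw [Gs, mul_pow, PowerSeries.coeff_X_pow_mul']
  simp [not_le.mpr h]

/-- the coefficients of `(1+X)^{-l}` -/
def cc (l m : ℕ) : ℚ := (-1)^m * ((l+m-1).choose m : ℚ)

lemma cc_def (l m : ℕ) : cc l m = (-1)^m * ((l+m-1).choose m : ℚ) := rfl

lemma cc_zero (m : ℕ) : cc 0 m = if m = 0 then 1 else 0 := by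
  cases m with
  | zero => simp [cc]
  | succ i =>
    have : i + 1 - 1 < i + 1 := by omega
    simp [cc, Nat.choose_eq_zero_of_lt this]

lemma cc_pascal (l m : ℕ) : cc (l+1) m + (if m = 0 then 0 else cc (l+1) (m-1)) = cc l m := by
  cases m with
  | zero => simp [cc]
  | succ i =>
    simp only [cc, Nat.succ_ne_zero, if_neg, if_false, Nat.add_sub_cancel, pow_succ]
    have h1 : l + 1 + (i+1) - 1 = (l + i) + 1 := by omega
    have h2 : l + 1 + i - 1 = l + i := by omega
    have h3 : l + (i+1) - 1 = l + i := by omega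
    rw [h1, h3, Nat.choose_succ_succ (l+i) i]
    have h2 : l + 1 + i - 1 = l + i := by omega
    rw [h2]
    push_cast
    ring

noncomputable def Us (c : ℕ → ℚ) : ℚ⟦X⟧ :=
  PowerSeries.mk fun n => ∑ m ∈ range (n+1), c m * PowerSeries.coeff n (Gs^m)

lemma coeff_Us (c : ℕ → ℚ) (n : ℕ) :
    PowerSeries.coeff n (Us c) = ∑ m ∈ range (n+1), c m * PowerSeries.coeff n (Gs^m) :=
  coeff_mk _ _

lemma coeff_Us_mul_Gs (c : ℕ → ℚ) (n : ℕ) :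
    PowerSeries.coeff n (Us c * Gs) = ∑ m ∈ range (n+1), c m * PowerSeries.coeff n (Gs^(m+1)) := by
  rw [PowerSeries.coeff_mul, Finset.Nat.sum_antidiagonal_eq_sum_range_succ
    (fun i j => PowerSeries.coeff i (Us c) * PowerSeries.coeff j Gs)]
  have h1 : ∀ i ∈ range (n+1), PowerSeries.coeff i (Us c) * PowerSeries.coeff (n-i) Gs
      = ∑ m ∈ range (n+1), c m * (PowerSeries.coeff i (Gs^m) * PowerSeries.coeff (n-i) Gs) := by
    intro i hi
    rw [coeff_Us, Finset.sum_mul]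
    rcases Finset.mem_range.mp hi with hi'
    rw [← Finset.sum_subset (Finset.range_subset_range.mpr (by omega : i+1 ≤ n+1))]
    · exact Finset.sum_congr rfl fun m _ => by ring
    · intro m _ hm
      rw [coeff_Gs_pow (by simp at hm ⊢; omega)]
      ring
  rw [Finset.sum_congr rfl h1, Finset.sum_comm]
  refine Finset.sum_congr rfl fun m _ => ?_
  rw [← Finset.mul_sum, pow_succ, PowerSeries.coeff_mul,
    Finset.Nat.sum_antidiagonal_eq_sum_range_succ
      (fun i j => PowerSeries.coeff i (Gs^m) * PowerSeries.coeff j Gs)]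

lemma Us_mul_Fs (c : ℕ → ℚ) :
    Us c * Fs = Us (fun m => c m + if m = 0 then 0 else c (m-1)) := by
  rw [Fs_eq, mul_add, mul_one]
  ext n
  rw [map_add, coeff_Us, coeff_Us_mul_Gs, coeff_Us]
  have key : ∑ m ∈ range (n+1), c m * PowerSeries.coeff n (Gs^(m+1))
      = ∑ m ∈ range (n+1), (if m = 0 then 0 else c (m-1)) * PowerSeries.coeff n (Gs^m) := by
    rw [Finset.sum_range_succ' (fun m => (if m = 0 then 0 else c (m-1)) * PowerSeries.coeff n (Gs^m)),
      Finset.sum_range_succ (fun m => c m * PowerSeries.coeff n (Gs^(m+1)))]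
    simp [coeff_Gs_pow (Nat.lt_succ_self n)]
  rw [key, ← Finset.sum_add_distrib]
  exact Finset.sum_congr rfl fun m _ => by ring

lemma Us_cc_zero : Us (cc 0) = 1 := by
  ext n
  rw [coeff_Us]
  simp only [cc_zero, ite_mul, zero_mul, one_mul]
  rw [Finset.sum_ite_eq' (range (n+1)) 0 (fun m => PowerSeries.coeff n (Gs^m))]
  simp [PowerSeries.coeff_one]

lemma Us_cc_mul_Fs_pow (l : ℕ) : Us (cc l) * Fs ^ l = 1 := by
  induction l with
  | zero => simpa using Us_cc_zero
  | succ l ih =>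
    have : Us (cc (l+1)) * Fs = Us (cc l) := by
      rw [Us_mul_Fs]
      have : (fun m => cc (l+1) m + if m = 0 then 0 else cc (l+1) (m-1)) = cc l :=
        funext fun m => cc_pascal l m
      rw [this]
    calc Us (cc (l+1)) * Fs ^ (l+1) = (Us (cc (l+1)) * Fs) * Fs ^ l := by ring
    _ = 1 := by rw [this, ih]

lemma constCoeff_Fs : PowerSeries.constantCoeff Fs ≠ 0 := by
  rw [Fs, ← coeff_zero_eq_constantCoeff_apply, coeff_mk]
  norm_num

lemma coeff_inv_Fs_pow (l n : ℕ) :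
    PowerSeries.coeff n (Fs⁻¹ ^ l) = ∑ m ∈ range (n+1), cc l m * PowerSeries.coeff n (Gs^m) := by
  have h1 : Fs⁻¹ ^ l * Fs ^ l = 1 := by
    rw [← mul_pow, PowerSeries.inv_mul_cancel Fs constCoeff_Fs, one_pow]
  have h2 : Fs ^ l * Fs⁻¹ ^ l = 1 := by rw [mul_comm]; exact h1
  have : Us (cc l) = Fs⁻¹ ^ l := by
    calc Us (cc l) = Us (cc l) * (Fs ^ l * Fs⁻¹ ^ l) := by rw [h2, mul_one]
    _ = (Us (cc l) * Fs ^ l) * Fs⁻¹ ^ l := by ring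
    _ = Fs⁻¹ ^ l := by rw [Us_cc_mul_Fs_pow, one_mul]
  rw [← this, coeff_Us]

noncomputable def Vs (L : ℕ) : ℚ⟦X⟧ := PowerSeries.mk (cc L)

lemma coeff_one_add_X_pow (p j : ℕ) :
    PowerSeries.coeff j ((1 + X)^p) = (p.choose j : ℚ) := by
  induction p generalizing j with
  | zero =>
    rw [pow_zero, PowerSeries.coeff_one]
    rcases Nat.eq_zero_or_pos j with h | h
    · simp [h]
    · simp [Nat.pos_iff_ne_zero.mp h, Nat.choose_eq_zero_of_lt h]
  | succ p ih =>
    rw [pow_succ, mul_add, mul_one, map_add, ih]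
    cases j with
    | zero => simp [Nat.choose_zero_right]
    | succ i =>
      rw [PowerSeries.coeff_succ_mul_X, ih, Nat.choose_succ_succ]
      push_cast; ring

lemma Vs_mul_pow (L : ℕ) : Vs L * (1 + X)^L = 1 := by
  induction L with
  | zero =>
    rw [pow_zero, mul_one]
    ext n
    rw [Vs, coeff_mk, cc_zero, PowerSeries.coeff_one]
  | succ L ih =>
    have step : Vs (L+1) * (1 + X) = Vs L := by
      ext n
      rw [mul_add, mul_one, map_add, Vs, Vs, coeff_mk, coeff_mk]
      cases n with
      | zero => simp [cc]
      | succ i =>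
        rw [PowerSeries.coeff_succ_mul_X, coeff_mk, ← cc_pascal L (i+1)]
        simp
    calc Vs (L+1) * (1+X)^(L+1) = (Vs (L+1) * (1+X)) * (1+X)^L := by ring
    _ = 1 := by rw [step, ih]

lemma vand (L d s : ℕ) :
    ∑ j ∈ range (s+1), cc L j * ((L+d).choose (s-j) : ℚ) = (d.choose s : ℚ) := by
  have h : Vs L * (1+X)^(L+d) = (1+X)^d := by
    rw [pow_add, ← mul_assoc, Vs_mul_pow, one_mul]
  have := congrArg (PowerSeries.coeff s) h
  rw [PowerSeries.coeff_mul, Finset.Nat.sum_antidiagonal_eq_sum_range_succ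
    (fun i j => PowerSeries.coeff i (Vs L) * PowerSeries.coeff j ((1+X)^(L+d))),
    coeff_one_add_X_pow] at this
  rw [← this]
  exact Finset.sum_congr rfl fun j _ => by rw [Vs, coeff_mk, coeff_one_add_X_pow]

lemma trinom (l k m : ℕ) (h : m ≤ k) :
    ((l+k-1).choose k : ℚ) * (k.choose m : ℚ)
      = ((l+m-1).choose m : ℚ) * ((l+k-1).choose (k-m) : ℚ) := by
  cases l with
  | zero =>
    rcases Nat.eq_zero_or_pos k with hk | hk
    · subst hk; interval_cases m; simp
    rcases Nat.eq_zero_or_pos m with hm | hm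
    · subst hm; simp
    · rw [Nat.choose_eq_zero_of_lt (by omega : 0 + k - 1 < k),
        Nat.choose_eq_zero_of_lt (by omega : 0 + m - 1 < m)]
      push_cast; ring
  | succ l' =>
    have e1 : l' + 1 + k - 1 = l' + k := by omega
    have e2 : l' + 1 + m - 1 = l' + m := by omega
    rw [e1, e2]
    rw [Nat.cast_choose ℚ (by omega : k ≤ l' + k), Nat.cast_choose ℚ h,
      Nat.cast_choose ℚ (by omega : m ≤ l' + m), Nat.cast_choose ℚ (by omega : k - m ≤ l' + k)]
    have e3 : l' + k - k = l' := by omega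
    have e4 : l' + m - m = l' := by omega
    have e5 : l' + k - (k - m) = l' + m := by omega
    rw [e3, e4, e5]
    have nz : ∀ a : ℕ, (a ! : ℚ) ≠ 0 := fun a => Nat.cast_ne_zero.mpr (Nat.factorial_ne_zero a)
    field_simp

lemma keyid (l n m : ℕ) (h : m ≤ n) :
    ∑ k ∈ range (n+1), (-1:ℚ)^k * ((l+n).choose (n-k) : ℚ) * ((l+k-1).choose k : ℚ) * (k.choose m : ℚ)
      = cc l m := by
  have hvan : ∑ j ∈ range ((n-m)+1), cc (l+m) j * ((l+n).choose ((n-m)-j) : ℚ) = 1 := by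
    have h2 := vand (l+m) (n-m) (n-m)
    rw [Nat.choose_self, Nat.cast_one] at h2
    have e : l + m + (n - m) = l + n := by omega
    rw [e] at h2
    exact h2
  have hsub : Finset.Ico m (n+1) ⊆ range (n+1) := by
    intro x hx
    simp only [Finset.mem_Ico] at hx
    exact Finset.mem_range.mpr hx.2
  rw [← Finset.sum_subset hsub (fun k hk hk' => ?_)]
  · rw [Finset.sum_Ico_eq_sum_range]
    have hcard : n + 1 - m = (n - m) + 1 := by omega
    rw [hcard]
    have hterm : ∀ j ∈ range ((n-m)+1),
        (-1:ℚ)^(m+j) * ((l+n).choose (n-(m+j)) : ℚ) * ((l+(m+j)-1).choose (m+j) : ℚ) * ((m+j).choose m : ℚ)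
          = ((-1:ℚ)^m * ((l+m-1).choose m : ℚ)) * (cc (l+m) j * ((l+n).choose ((n-m)-j) : ℚ)) := by
      intro j hj
      have ht := trinom l (m+j) m (by omega)
      have e1 : m + j - m = j := by omega
      have e3 : l + (m + j) - 1 = l + m + j - 1 := by omega
      rw [e1, e3] at ht
      have e2 : n - (m+j) = (n-m) - j := by omega
      rw [e2, e3, cc_def, pow_add]
      linear_combination ((-1:ℚ)^m * (-1:ℚ)^j * ((l+n).choose ((n-m)-j) : ℚ)) * ht
    rw [Finset.sum_congr rfl hterm, ← Finset.mul_sum, hvan, mul_one, cc_def]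
  · have hklt : k < m := by
      simp only [Finset.mem_Ico, not_and, not_le] at hk'
      have := Finset.mem_range.mp hk
      omega
    rw [Nat.choose_eq_zero_of_lt hklt]
    push_cast; ring

lemma Fs_pow_eq (k : ℕ) : Fs ^ k = ∑ m ∈ range (k+1), Gs ^ m * (k.choose m : ℚ⟦X⟧) := by
  rw [Fs_eq, add_comm, add_pow]
  exact Finset.sum_congr rfl fun m _ => by rw [one_pow, mul_one]

lemma coeff_Fs_pow (k n : ℕ) (hk : k ≤ n) :
    PowerSeries.coeff n (Fs^k) = ∑ m ∈ range (n+1), (k.choose m : ℚ) * PowerSeries.coeff n (Gs^m) := by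
  have hc : ∀ m, PowerSeries.coeff n (Gs ^ m * (k.choose m : ℚ⟦X⟧))
      = (k.choose m : ℚ) * PowerSeries.coeff n (Gs^m) := by
    intro m
    have : (k.choose m : ℚ⟦X⟧) = PowerSeries.C (k.choose m : ℚ) := by
      simp [map_natCast]
    rw [this, mul_comm, PowerSeries.coeff_C_mul]
  rw [Fs_pow_eq, map_sum]
  simp only [hc]
  rw [← Finset.sum_subset (Finset.range_subset_range.mpr (by omega : k+1 ≤ n+1)) (fun m _ hm => ?_)]
  rw [Nat.choose_eq_zero_of_lt (by simp at hm; omega), Nat.cast_zero, zero_mul]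

lemma X_mul_Fs : X * Fs = PowerSeries.exp ℚ - 1 := by
  ext j
  rw [map_sub, Fs]
  cases j with
  | zero => simp [PowerSeries.coeff_exp]
  | succ i =>
    rw [PowerSeries.coeff_succ_X_mul, coeff_mk, PowerSeries.coeff_exp, PowerSeries.coeff_one]
    simp [Algebra.algebraMap_self]

lemma coeff_exp_pow (j m : ℕ) :
    PowerSeries.coeff m (PowerSeries.exp ℚ ^ j) = (j:ℚ)^m / m ! := by
  rw [PowerSeries.exp_pow_eq_rescale_exp, PowerSeries.coeff_rescale, PowerSeries.coeff_exp]
  simp [div_eq_mul_inv]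

lemma coeff_Fs_pow_exp (k n : ℕ) :
    ((n+k)! : ℚ) * PowerSeries.coeff n (Fs^k)
      = ∑ j ∈ range (k+1), (-1:ℚ)^(k-j) * (k.choose j : ℚ) * (j:ℚ)^(n+k) := by
  have h1 : PowerSeries.coeff n (Fs^k) = PowerSeries.coeff (n+k) ((PowerSeries.exp ℚ - 1)^k) := by
    rw [← X_mul_Fs, mul_pow, PowerSeries.coeff_X_pow_mul]
  have h2 : (PowerSeries.exp ℚ - 1)^k
      = ∑ j ∈ range (k+1), PowerSeries.exp ℚ ^ j * (-1:ℚ⟦X⟧)^(k-j) * ((k.choose j : ℕ) : ℚ⟦X⟧) := by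
    rw [sub_eq_add_neg, add_pow]
  rw [h1, h2, map_sum]
  rw [Finset.mul_sum]
  refine Finset.sum_congr rfl fun j hj => ?_
  have e1 : ((-1:ℚ⟦X⟧)^(k-j)) = PowerSeries.C ((-1:ℚ)^(k-j)) := by
    rw [map_pow, map_neg, map_one]
  have e2 : ((k.choose j : ℕ) : ℚ⟦X⟧) = PowerSeries.C (k.choose j : ℚ) := by
    simp [map_natCast]
  rw [e1, e2, mul_assoc, ← map_mul, PowerSeries.coeff_mul_C, coeff_exp_pow]
  have : ((n+k)! : ℚ) ≠ 0 := Nat.cast_ne_zero.mpr (Nat.factorial_ne_zero _)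
  field_simp

/-- The generalized Bernoulli numbers $B_n^{(l)}$ of order $l$. -/
noncomputable def genBernoulli (l n : ℕ) : ℚ :=
  (n ! : ℚ) * PowerSeries.coeff n ((PowerSeries.mk fun k => (1 : ℚ) / (k + 1)!)⁻¹ ^ l)

theorem stmt_10 (l n : ℕ) :
    genBernoulli l n =
      ∑ k ∈ range (n + 1),
        ((l + n).choose (n - k) : ℚ) * ((l + k - 1).choose k : ℚ) *
          ((n ! : ℚ) / ((n + k)! : ℚ)) *
          ∑ j ∈ range (k + 1), (-1 : ℚ) ^ j * (k.choose j : ℚ) * (j : ℚ) ^ (n + k) := by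
  have hfac : ∀ a : ℕ, (a ! : ℚ) ≠ 0 := fun a => Nat.cast_ne_zero.mpr (Nat.factorial_ne_zero a)
  have hJ : ∀ k, ∑ j ∈ range (k + 1), (-1 : ℚ) ^ j * (k.choose j : ℚ) * (j : ℚ) ^ (n + k)
      = (-1:ℚ)^k * (((n+k)! : ℚ) * PowerSeries.coeff n (Fs^k)) := by
    intro k
    rw [coeff_Fs_pow_exp, Finset.mul_sum]
    refine Finset.sum_congr rfl fun j hj => ?_
    have hjk : j ≤ k := by simp at hj; omega
    have hsign : (-1:ℚ)^k * (-1:ℚ)^(k-j) = (-1:ℚ)^j := by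
      rw [← pow_add]
      have e : k + (k - j) = 2*(k-j) + j := by omega
      rw [e, pow_add, pow_mul]
      norm_num
    linear_combination (-(k.choose j : ℚ) * (j:ℚ)^(n+k)) * hsign
  have hterm : ∀ k ∈ range (n+1),
      ((l + n).choose (n - k) : ℚ) * ((l + k - 1).choose k : ℚ) *
          ((n ! : ℚ) / ((n + k)! : ℚ)) *
          ∑ j ∈ range (k + 1), (-1 : ℚ) ^ j * (k.choose j : ℚ) * (j : ℚ) ^ (n + k)
        = (n ! : ℚ) * ∑ m ∈ range (n+1),
            ((-1:ℚ)^k * ((l + n).choose (n - k) : ℚ) * ((l + k - 1).choose k : ℚ) * (k.choose m : ℚ))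
              * PowerSeries.coeff n (Gs^m) := by
    intro k hk
    rw [hJ k, coeff_Fs_pow k n (by simp at hk; omega)]
    simp only [Finset.mul_sum]
    refine Finset.sum_congr rfl fun m _ => ?_
    field_simp
  rw [Finset.sum_congr rfl hterm, ← Finset.mul_sum, Finset.sum_comm]
  have hswap : ∀ m ∈ range (n+1),
      ∑ k ∈ range (n+1), ((-1:ℚ)^k * ((l + n).choose (n - k) : ℚ) * ((l + k - 1).choose k : ℚ)
          * (k.choose m : ℚ)) * PowerSeries.coeff n (Gs^m)
        = cc l m * PowerSeries.coeff n (Gs^m) := by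
    intro m hm
    rw [← Finset.sum_mul, keyid l n m (by simp at hm; omega)]
  rw [Finset.sum_congr rfl hswap]
  rw [genBernoulli]
  have : (PowerSeries.mk fun k => (1 : ℚ) / (k + 1)!) = Fs := rfl
  rw [this, coeff_inv_Fs_pow]
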